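/- For every N ≥ 2 and every KC-PMI P on N parties: (i) the set of subsystems X (with |X| ≥ 2) whose β-set is positive or partial is upward closed under inclusion, and for every such X whose β-set is not completely essential there exists Z ⊊ X with |Z| ≥ 2 and β(Z) completely essential; (ii) the subsystems with completely essential β-sets form an antichain under inclusion, and for any such Y, every Z ⊊ Y with |Z| ≥ 2 has β(Z) vanishing; (iii) the set of subsystems with vanishing β-sets is downward closed under inclusion and is the complement (within the subsystems of size ≥ 2) of the set in (i). -/
import Mathlib


namespace HEC

/-- The parties `⟦N⟧ = {0,1,…,N}`, where `0` is the purifier. -/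
abbrev Party (N : ℕ) := Fin (N + 1)

/-- A collection of parties. -/
abbrev PSet (N : ℕ) := Finset (Party N)

/-- MI instances: unordered pairs of subsets of parties. -/
abbrev MI (N : ℕ) := Sym2 (PSet N)

/-- `m` is an MI instance, i.e. an unordered pair of disjoint nonempty subsets of `⟦N⟧`. -/
def IsMIInst {N : ℕ} (m : MI N) : Prop :=
  ∃ Y Z : PSet N, m = s(Y, Z) ∧ Y.Nonempty ∧ Z.Nonempty ∧ Disjoint Y Z

/-- The MI-poset order: `{Y,Z} ⪯ {Y',Z'}` iff (`Y ⊆ Y'` and `Z ⊆ Z'`) or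
(`Y ⊆ Z'` and `Z ⊆ Y'`).  (The two cases are absorbed by the existential over
representatives of the unordered pairs.) -/
def MIle {N : ℕ} (m m' : MI N) : Prop :=
  ∃ Y Z Y' Z' : PSet N, m = s(Y, Z) ∧ m' = s(Y', Z') ∧ Y ⊆ Y' ∧ Z ⊆ Z'

/-- An `N`-party entropy vector, extended to all subsets of `⟦N⟧` by the purification
convention: `S ∅ = 0` and `S Y = S (⟦N⟧ \ Y)` whenever `0 ∈ Y`. -/
structure EntropyVec (N : ℕ) where
  S : PSet N → ℝ
  S_empty : S ∅ = 0
  S_purify : ∀ Y : PSet N, (0 : Party N) ∈ Y → S Y = S (Finset.univ \ Y)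

/-- Mutual information `I(Y:Z) = S_Y + S_Z - S_{Y∪Z}`. -/
def EntropyVec.I {N : ℕ} (v : EntropyVec N) (Y Z : PSet N) : ℝ :=
  v.S Y + v.S Z - v.S (Y ∪ Z)

/-- Membership in the subadditivity cone: `I(Y:Z) ≥ 0` for every MI instance. -/
def EntropyVec.InSAC {N : ℕ} (v : EntropyVec N) : Prop :=
  ∀ Y Z : PSet N, Y.Nonempty → Z.Nonempty → Disjoint Y Z → 0 ≤ v.I Y Z

/-- The pattern of marginal independence of `v`: the MI instances vanishing on `v`. -/
def EntropyVec.PMI {N : ℕ} (v : EntropyVec N) : Set (MI N) :=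
  {m | ∃ Y Z : PSet N, m = s(Y, Z) ∧ Y.Nonempty ∧ Z.Nonempty ∧ Disjoint Y Z ∧ v.I Y Z = 0}

/-- `P` is a down-set in the MI-poset. -/
def IsMIDownSet {N : ℕ} (P : Set (MI N)) : Prop :=
  ∀ m m' : MI N, IsMIInst m → m' ∈ P → MIle m m' → m ∈ P

/-- `P` is a KC-PMI: the PMI of some entropy vector in the subadditivity cone,
which moreover is a down-set in the MI-poset. -/
def IsKCPMI {N : ℕ} (P : Set (MI N)) : Prop :=
  (∃ v : EntropyVec N, v.InSAC ∧ P = v.PMI) ∧ IsMIDownSet P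

/-- The β-set of `X`: all MI instances `{Y,Z}` with `Y ∪ Z = X`. -/
def betaSet {N : ℕ} (X : PSet N) : Set (MI N) :=
  {m | ∃ Y Z : PSet N, m = s(Y, Z) ∧ Y.Nonempty ∧ Z.Nonempty ∧ Disjoint Y Z ∧ Y ∪ Z = X}

/-- The antichain `A` of minimal elements of `P̄ = M_N ∖ P`. -/
def minimalMI {N : ℕ} (P : Set (MI N)) : Set (MI N) :=
  {m | IsMIInst m ∧ m ∉ P ∧ ∀ m' : MI N, IsMIInst m' → m' ∉ P → MIle m' m → m' = m}

/-- `β(X)` is positive: `β(X) ⊆ P̄`. -/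
def BPos {N : ℕ} (P : Set (MI N)) (X : PSet N) : Prop :=
  ∀ m ∈ betaSet X, m ∉ P

/-- `β(X)` is vanishing: `β(X) ⊆ P`. -/
def BVan {N : ℕ} (P : Set (MI N)) (X : PSet N) : Prop :=
  betaSet X ⊆ P

/-- `β(X)` is partial: it has elements both in `P` and in `P̄`. -/
def BPart {N : ℕ} (P : Set (MI N)) (X : PSet N) : Prop :=
  (∃ m ∈ betaSet X, m ∈ P) ∧ (∃ m ∈ betaSet X, m ∉ P)

/-- `β(X)` is essential: `β(X) ∩ A ≠ ∅`. -/
def BEss {N : ℕ} (P : Set (MI N)) (X : PSet N) : Prop :=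
  ∃ m ∈ betaSet X, m ∈ minimalMI P

/-- `β(X)` is completely essential: `β(X) ⊆ A`. -/
def BCEss {N : ℕ} (P : Set (MI N)) (X : PSet N) : Prop :=
  betaSet X ⊆ minimalMI P

/-- `β(X)` is non-essential: `β(X) ∩ A = ∅`. -/
def BNEss {N : ℕ} (P : Set (MI N)) (X : PSet N) : Prop :=
  ∀ m ∈ betaSet X, m ∉ minimalMI P

/-- `pos_<(Y)`: the proper subsystems `Z ⊊ Y` with `|Z| ≥ 2` and `β(Z)` positive. -/
def posBelow {N : ℕ} (P : Set (MI N)) (Y : PSet N) : Set (PSet N) :=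
  {Z | Z ⊂ Y ∧ 2 ≤ Z.card ∧ BPos P Z}

/-- `Max(pos_<(Y))`: the inclusion-maximal elements of `pos_<(Y)`. -/
def maxPosBelow {N : ℕ} (P : Set (MI N)) (Y : PSet N) : Set (PSet N) :=
  {Z | Z ∈ posBelow P Y ∧ ∀ Z' ∈ posBelow P Y, Z ⊆ Z' → Z = Z'}

/-- The MI instance `m = {Y,Z}` splits `X` if `X ∩ Y ≠ ∅` and `X ∩ Z ≠ ∅`. -/
def Splits {N : ℕ} (m : MI N) (X : PSet N) : Prop :=
  ∃ Y Z : PSet N, m = s(Y, Z) ∧ (X ∩ Y).Nonempty ∧ (X ∩ Z).Nonempty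

/-- The hyperedges of the correlation hypergraph `H_P`: one hyperedge `e_X` for each
`X ⊆ ⟦N⟧` (with `|X| ≥ 2`) whose β-set is positive.  Vertices `v_ℓ` are identified
with the parties `ℓ ∈ ⟦N⟧`, and hyperedges with the corresponding subsystems. -/
def Hedge {N : ℕ} (P : Set (MI N)) : Set (PSet N) :=
  {X | 2 ≤ X.card ∧ BPos P X}

/-- The hyperedges of the sub-hypergraph `H_Y`: the hyperedges `e_Z` with `Z ⊊ Y`. -/
def subEdges {N : ℕ} (P : Set (MI N)) (Y : PSet N) : Set (PSet N) :=
  {Z | Z ⊂ Y ∧ Z ∈ Hedge P}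

/-- One step in a hypergraph with hyperedge set `E`: `a` and `b` lie in a common
hyperedge. -/
def hStep {N : ℕ} (E : Set (PSet N)) (a b : Party N) : Prop :=
  ∃ e ∈ E, a ∈ e ∧ b ∈ e

/-- Connectivity of the hypergraph with vertex set `V` and hyperedge set `E`:
every two vertices are joined by a path (a one-vertex hypergraph is connected). -/
def hConn {N : ℕ} (V : PSet N) (E : Set (PSet N)) : Prop :=
  ∀ a ∈ V, ∀ b ∈ V, Relation.ReflTransGen (hStep E) a b

/-- The vertex set of the connected component of `a` in the hypergraph with
vertex set `V` and hyperedge set `E`. -/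
def hComp {N : ℕ} (V : PSet N) (E : Set (PSet N)) (a : Party N) : Set (Party N) :=
  {b | b ∈ V ∧ Relation.ReflTransGen (hStep E) a b}

/-- A clique of the line graph `L_{H_P}`: a set of hyperedges of `H_P` which are
pairwise adjacent (distinct hyperedges being adjacent iff they intersect). -/
def IsLineClique {N : ℕ} (P : Set (MI N)) (Q : Set (PSet N)) : Prop :=
  Q ⊆ Hedge P ∧ ∀ e ∈ Q, ∀ f ∈ Q, e ≠ f → (e ∩ f).Nonempty

/-- A max-clique of the line graph `L_{H_P}`: a (nonempty) clique which is maximal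
under inclusion. -/
def IsMaxClique {N : ℕ} (P : Set (MI N)) (Q : Set (PSet N)) : Prop :=
  Q.Nonempty ∧ IsLineClique P Q ∧ ∀ Q' : Set (PSet N), IsLineClique P Q' → Q ⊆ Q' → Q = Q'

/-- `Q^∩`: the intersection of the hyperedges in `Q`, viewed as sets of vertices. -/
def qInter {N : ℕ} (Q : Set (PSet N)) : Set (Party N) :=
  {ℓ | ∀ e ∈ Q, ℓ ∈ e}

section AuxLemmas

variable {N : ℕ}

lemma I_comm (v : EntropyVec N) (Y Z : PSet N) : v.I Y Z = v.I Z Y := by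
  simp only [EntropyVec.I, Finset.union_comm]; ring

lemma mem_pmi_iff (v : EntropyVec N) {Y Z : PSet N} (hY : Y.Nonempty) (hZ : Z.Nonempty)
    (hd : Disjoint Y Z) : s(Y, Z) ∈ v.PMI ↔ v.I Y Z = 0 := by
  constructor
  · rintro ⟨Y', Z', he, _, _, _, hI⟩
    rw [Sym2.eq_iff] at he
    rcases he with ⟨rfl, rfl⟩ | ⟨rfl, rfl⟩
    · exact hI
    · rw [I_comm]; exact hI
  · intro h; exact ⟨Y, Z, rfl, hY, hZ, hd, h⟩

lemma exists_split {X : PSet N} (h2 : 2 ≤ X.card) :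
    ∃ Y Z : PSet N, Y.Nonempty ∧ Z.Nonempty ∧ Disjoint Y Z ∧ Y ∪ Z = X := by
  obtain ⟨a, ha⟩ : X.Nonempty := Finset.card_pos.mp (by omega)
  refine ⟨{a}, X.erase a, Finset.singleton_nonempty a, ?_, ?_, ?_⟩
  · rw [← Finset.card_pos, Finset.card_erase_of_mem ha]; omega
  · simp [Finset.disjoint_singleton_left]
  · rw [← Finset.insert_eq, Finset.insert_erase ha]

lemma mem_betaSet {X Y Z : PSet N} (hY : Y.Nonempty) (hZ : Z.Nonempty)
    (hd : Disjoint Y Z) (hu : Y ∪ Z = X) : s(Y, Z) ∈ betaSet X :=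
  ⟨Y, Z, rfl, hY, hZ, hd, hu⟩

lemma extend_split {X Z Y W : PSet N} (hZX : Z ⊆ X) (hY : Y.Nonempty)
    (hd : Disjoint Y W) (hu : Y ∪ W = Z) :
    (Y ∪ (X \ Z)).Nonempty ∧ Disjoint (Y ∪ (X \ Z)) W ∧ (Y ∪ (X \ Z)) ∪ W = X ∧
      MIle s(Y, W) s(Y ∪ (X \ Z), W) := by
  have hWZ : W ⊆ Z := hu ▸ Finset.subset_union_right
  refine ⟨hY.mono Finset.subset_union_left, ?_, ?_, ?_⟩
  · exact Finset.disjoint_union_left.mpr ⟨hd, (Finset.sdiff_disjoint).mono_right hWZ⟩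
  · rw [Finset.union_right_comm, hu, Finset.union_sdiff_of_subset hZX]
  · exact ⟨Y, W, Y ∪ (X \ Z), W, rfl, rfl, Finset.subset_union_left, subset_rfl⟩

lemma bvan_mono {P : Set (MI N)} (hds : IsMIDownSet P) {Z X : PSet N} (hZX : Z ⊆ X)
    (hX : BVan P X) : BVan P Z := by
  rintro m ⟨Y, W, rfl, hY, hW, hd, hu⟩
  obtain ⟨hne, hd', hu', hle⟩ := extend_split hZX hY hd hu
  exact hds _ _ ⟨Y, W, rfl, hY, hW, hd⟩ (hX (mem_betaSet hne hW hd' hu')) hle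

lemma bvan_iff {P : Set (MI N)} {X : PSet N} (h2 : 2 ≤ X.card) :
    BVan P X ↔ ¬ (BPos P X ∨ BPart P X) := by
  obtain ⟨Y, Z, hY, hZ, hd, hu⟩ := exists_split h2
  have hmem : s(Y, Z) ∈ betaSet X := mem_betaSet hY hZ hd hu
  constructor
  · rintro hv (hpos | hpart)
    · exact hpos _ hmem (hv hmem)
    · obtain ⟨m, hm, hmP⟩ := hpart.2; exact hmP (hv hm)
  · intro h
    by_contra hv
    obtain ⟨m, hm, hmP⟩ := Set.not_subset.mp hv
    by_cases hall : ∃ m' ∈ betaSet X, m' ∈ P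
    · exact h (Or.inr ⟨hall, ⟨m, hm, hmP⟩⟩)
    · push_neg at hall
      exact h (Or.inl fun m' hm' => hall m' hm')

lemma S_eq_sum (v : EntropyVec N) {X : PSet N}
    (H : ∀ A : PSet N, A ⊆ X → A ≠ X → ∀ Y Z : PSet N, Y.Nonempty → Z.Nonempty →
      Disjoint Y Z → Y ∪ Z = A → v.I Y Z = 0) :
    ∀ A : PSet N, A ⊆ X → A ≠ X → v.S A = ∑ i ∈ A, v.S {i} := by
  intro A
  induction A using Finset.strongInduction with
  | _ A ih =>
    intro hAX hAne
    rcases A.eq_empty_or_nonempty with rfl | ⟨a, ha⟩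
    · simp [v.S_empty]
    rcases eq_or_ne A {a} with rfl | hA1
    · simp
    have hB : A.erase a ⊂ A := Finset.erase_ssubset ha
    have hBne : (A.erase a).Nonempty := by
      rcases Finset.eq_empty_or_nonempty (A.erase a) with he | h
      · exact absurd (by rw [← Finset.insert_erase ha, he]; simp) hA1
      · exact h
    have hI : v.I {a} (A.erase a) = 0 :=
      H A hAX hAne {a} (A.erase a) (Finset.singleton_nonempty a) hBne
        (by simp) (by rw [← Finset.insert_eq, Finset.insert_erase ha])
    have hS : v.S A = v.S {a} + v.S (A.erase a) := by
      unfold EntropyVec.I at hI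
      rw [← Finset.insert_eq, Finset.insert_erase ha] at hI
      linarith
    have hBX : A.erase a ⊆ X := hB.subset.trans hAX
    have hBneX : A.erase a ≠ X :=
      fun h => hAne (Finset.Subset.antisymm hAX (h ▸ Finset.erase_subset a A))
    rw [hS, ih _ hB hBX hBneX]
    exact Finset.add_sum_erase A (fun i => v.S {i}) ha

lemma bcess_of_min {P : Set (MI N)} (v : EntropyVec N) (hPv : P = v.PMI)
    {X : PSet N} (h2 : 2 ≤ X.card)
    (hvan : ∀ W : PSet N, W ⊂ X → 2 ≤ W.card → BVan P W) (hX : ¬ BVan P X) :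
    BCEss P X := by
  -- additivity of S on proper subsets of X
  have H : ∀ A : PSet N, A ⊆ X → A ≠ X → ∀ Y Z : PSet N, Y.Nonempty → Z.Nonempty →
      Disjoint Y Z → Y ∪ Z = A → v.I Y Z = 0 := by
    intro A hAX hAne Y Z hY hZ hd hu
    have hA2 : 2 ≤ A.card := by
      rw [← hu, Finset.card_union_of_disjoint hd]
      have := Finset.card_pos.mpr hY
      have := Finset.card_pos.mpr hZ
      omega
    have : s(Y, Z) ∈ P := hvan A ⟨hAX, fun h => hAne (Finset.Subset.antisymm hAX h)⟩ hA2
      (mem_betaSet hY hZ hd hu)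
    rw [hPv] at this
    exact (mem_pmi_iff v hY hZ hd).mp this
  have Ssum := S_eq_sum v H
  -- every split of X has the same mutual information
  have Iconst : ∀ Y Z : PSet N, Y.Nonempty → Z.Nonempty → Disjoint Y Z → Y ∪ Z = X →
      v.I Y Z = (∑ i ∈ X, v.S {i}) - v.S X := by
    intro Y Z hY hZ hd hu
    have hYX : Y ≠ X := by
      rintro rfl
      exact hZ.ne_empty (Finset.eq_empty_of_forall_notMem fun x hx =>
        Finset.disjoint_right.mp hd hx (hu ▸ Finset.mem_union_right Y hx))
    have hZX : Z ≠ X := by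
      rintro rfl
      exact hY.ne_empty (Finset.eq_empty_of_forall_notMem fun x hx =>
        Finset.disjoint_left.mp hd hx (hu ▸ Finset.mem_union_left Z hx))
    have hYs : Y ⊆ X := hu ▸ Finset.subset_union_left
    have hZs : Z ⊆ X := hu ▸ Finset.subset_union_right
    rw [EntropyVec.I, hu, Ssum Y hYs hYX, Ssum Z hZs hZX, ← Finset.sum_union hd, hu]
  -- some split is not in P, hence the common value is nonzero
  obtain ⟨m0, hm0, hm0P⟩ := Set.not_subset.mp hX
  obtain ⟨Y0, Z0, rfl, hY0, hZ0, hd0, hu0⟩ := hm0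
  have hc : (∑ i ∈ X, v.S {i}) - v.S X ≠ 0 := by
    intro h
    apply hm0P
    rw [hPv]
    exact (mem_pmi_iff v hY0 hZ0 hd0).mpr ((Iconst Y0 Z0 hY0 hZ0 hd0 hu0).trans h)
  -- hence every split of X is not in P
  have hnotP : ∀ Y Z : PSet N, Y.Nonempty → Z.Nonempty → Disjoint Y Z → Y ∪ Z = X →
      s(Y, Z) ∉ P := by
    intro Y Z hY hZ hd hu hmem
    rw [hPv] at hmem
    exact hc ((Iconst Y Z hY hZ hd hu).symm.trans ((mem_pmi_iff v hY hZ hd).mp hmem))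
  -- now prove complete essentiality
  rintro m ⟨Y, Z, rfl, hY, hZ, hd, hu⟩
  refine ⟨⟨Y, Z, rfl, hY, hZ, hd⟩, hnotP Y Z hY hZ hd hu, ?_⟩
  rintro m' ⟨Y1, Z1, hm'1, hY1, hZ1, hd1⟩ hm'P ⟨Y2, Z2, A, B, hm'2, hmAB, hYA, hZB⟩
  -- transfer nonemptiness/disjointness to the representatives (Y2, Z2)
  have hrep : Y2.Nonempty ∧ Z2.Nonempty ∧ Disjoint Y2 Z2 := by
    have : s(Y1, Z1) = s(Y2, Z2) := hm'1 ▸ hm'2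
    rw [Sym2.eq_iff] at this
    rcases this with ⟨rfl, rfl⟩ | ⟨rfl, rfl⟩
    · exact ⟨hY1, hZ1, hd1⟩
    · exact ⟨hZ1, hY1, hd1.symm⟩
  obtain ⟨hY2, hZ2, hd2⟩ := hrep
  -- properties of (A, B)
  have hAB : Disjoint A B ∧ A ∪ B = X := by
    rw [Sym2.eq_iff] at hmAB
    rcases hmAB with ⟨rfl, rfl⟩ | ⟨rfl, rfl⟩
    · exact ⟨hd, hu⟩
    · exact ⟨hd.symm, (Finset.union_comm _ _).trans hu⟩
  obtain ⟨hdAB, huAB⟩ := hAB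
  have hsub : Y2 ∪ Z2 ⊆ X := huAB ▸ Finset.union_subset_union hYA hZB
  rcases eq_or_ne (Y2 ∪ Z2) X with heq | hne
  · -- the smaller instance fills X, so it must coincide with m
    have hAY2 : A = Y2 := by
      refine Finset.Subset.antisymm (fun x hx => ?_) hYA
      have hxX : x ∈ Y2 ∪ Z2 := heq.symm ▸ huAB ▸ Finset.mem_union_left B hx
      rcases Finset.mem_union.mp hxX with h | h
      · exact h
      · exact absurd (hZB h) (Finset.disjoint_left.mp hdAB hx)
    have hBZ2 : B = Z2 := by
      refine Finset.Subset.antisymm (fun x hx => ?_) hZB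
      have hxX : x ∈ Y2 ∪ Z2 := heq.symm ▸ huAB ▸ Finset.mem_union_right A hx
      rcases Finset.mem_union.mp hxX with h | h
      · exact absurd (hYA h) (Finset.disjoint_right.mp hdAB hx)
      · exact h
    rw [hm'2, hmAB, hAY2, hBZ2]
  · -- otherwise it lies in a proper β-set, which vanishes: contradiction
    have h22 : 2 ≤ (Y2 ∪ Z2).card := by
      rw [Finset.card_union_of_disjoint hd2]
      have := Finset.card_pos.mpr hY2
      have := Finset.card_pos.mpr hZ2
      omega
    have : m' ∈ P := hvan (Y2 ∪ Z2) (hsub.ssubset_of_ne hne) h22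
      (hm'2 ▸ mem_betaSet hY2 hZ2 hd2 rfl)
    exact absurd this hm'P

lemma exists_cess {P : Set (MI N)} (v : EntropyVec N) (hPv : P = v.PMI)
    (X : PSet N) : 2 ≤ X.card → ¬ BVan P X →
    ∃ Z : PSet N, Z ⊆ X ∧ 2 ≤ Z.card ∧ BCEss P Z := by
  induction X using Finset.strongInduction with
  | _ X ih =>
    intro h2 hX
    by_cases hall : ∀ W : PSet N, W ⊂ X → 2 ≤ W.card → BVan P W
    · exact ⟨X, subset_rfl, h2, bcess_of_min v hPv h2 hall hX⟩
    · push_neg at hall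
      obtain ⟨W, hWX, hW2, hWv⟩ := hall
      obtain ⟨Z, hZW, hZ2, hZc⟩ := ih W hWX hW2 hWv
      exact ⟨Z, hZW.trans hWX.subset, hZ2, hZc⟩

lemma bvan_of_cess_ssubset {P : Set (MI N)} {Y Z : PSet N}
    (hY : BCEss P Y) (hZY : Z ⊂ Y) : BVan P Z := by
  rintro m ⟨A, B, rfl, hA, hB, hd, hu⟩
  obtain ⟨hne, hd', hu', hle⟩ := extend_split hZY.subset hA hd hu
  have hmin := hY (mem_betaSet hne hB hd' hu')
  by_contra hP
  have heq := hmin.2.2 s(A, B) ⟨A, B, rfl, hA, hB, hd⟩ hP hle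
  rw [Sym2.eq_iff] at heq
  obtain ⟨x, hx⟩ := Finset.exists_of_ssubset hZY
  rcases heq with ⟨hAeq, _⟩ | ⟨hAeq, hBeq⟩
  · have hxA : x ∈ A := hAeq ▸ Finset.mem_union_right A (Finset.mem_sdiff.mpr hx)
    exact hx.2 (hu ▸ Finset.mem_union_left B hxA)
  · obtain ⟨a, ha⟩ := hA
    exact Finset.disjoint_left.mp hd ha (hAeq ▸ ha)

end AuxLemmas

/-- For every KC-PMI `P`:
(i) the subsystems (of size ≥ 2) with positive-or-partial β-set form an up-set under
inclusion, and below every such subsystem whose β-set is not completely essential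
there is a proper subsystem with completely essential β-set;
(ii) the subsystems with completely essential β-sets form an antichain, and every
proper subsystem (of size ≥ 2) of such a subsystem has vanishing β-set;
(iii) the subsystems with vanishing β-sets form a down-set, complementary (within the
subsystems of size ≥ 2) to the set in (i). -/
theorem statement6 {N : ℕ} (hN : 2 ≤ N) (P : Set (MI N)) (hP : IsKCPMI P) :
    -- (i)
    ((∀ X X' : PSet N, 2 ≤ X.card → X ⊆ X' →
        (BPos P X ∨ BPart P X) → (BPos P X' ∨ BPart P X')) ∧
     (∀ X : PSet N, 2 ≤ X.card → (BPos P X ∨ BPart P X) → ¬ BCEss P X →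
        ∃ Z : PSet N, Z ⊂ X ∧ 2 ≤ Z.card ∧ BCEss P Z)) ∧
    -- (ii)
    ((∀ Y Y' : PSet N, 2 ≤ Y.card → 2 ≤ Y'.card →
        BCEss P Y → BCEss P Y' → Y ⊆ Y' → Y = Y') ∧
     (∀ Y : PSet N, 2 ≤ Y.card → BCEss P Y →
        ∀ Z : PSet N, Z ⊂ Y → 2 ≤ Z.card → BVan P Z)) ∧
    -- (iii)
    ((∀ X Z : PSet N, 2 ≤ Z.card → Z ⊆ X → BVan P X → BVan P Z) ∧
     (∀ X : PSet N, 2 ≤ X.card → (BVan P X ↔ ¬ (BPos P X ∨ BPart P X)))) := by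
  obtain ⟨⟨v, _, hPv⟩, hds⟩ := hP
  refine ⟨⟨?_, ?_⟩, ⟨?_, ?_⟩, ⟨?_, ?_⟩⟩
  · -- (i) up-set
    intro X X' h2 hss h
    have h2' : 2 ≤ X'.card := h2.trans (Finset.card_le_card hss)
    by_contra hc
    exact (bvan_iff h2).mp (bvan_mono hds hss ((bvan_iff h2').mpr hc)) h
  · -- (i) existence of completely essential proper subsystem
    intro X h2 h hnc
    have hnv : ¬ BVan P X := fun hv => (bvan_iff h2).mp hv h
    obtain ⟨Z, hZX, hZ2, hZc⟩ := exists_cess v hPv X h2 hnv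
    exact ⟨Z, hZX.ssubset_of_ne (fun he => hnc (he ▸ hZc)), hZ2, hZc⟩
  · -- (ii) antichain
    intro Y Y' h2 h2' hY hY' hss
    by_contra hne
    have hvY : BVan P Y := bvan_of_cess_ssubset hY' (hss.ssubset_of_ne hne)
    obtain ⟨A, B, hA, hB, hd, hu⟩ := exists_split h2
    have hmem := mem_betaSet hA hB hd hu
    exact (hY hmem).2.1 (hvY hmem)
  · -- (ii) vanishing below completely essential
    intro Y _ hY Z hZY _
    exact bvan_of_cess_ssubset hY hZY
  · -- (iii) down-set
    intro X Z _ hZX hX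
    exact bvan_mono hds hZX hX
  · -- (iii) complement
    intro X h2
    exact bvan_iff h2

end HEC
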